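/- Let u be a C² convex solution of the translating soliton equation on an open convex set Ω ⊆ ℝ². Then the function H(x) := 1/√(1 + |∇u(x)|²) satisfies |∇H(x)| ≤ 1 for all x ∈ Ω; consequently H is 1-Lipschitz with respect to the Euclidean distance: |H(x) − H(y)| ≤ |x − y| for all x, y ∈ Ω. -/

import Mathlib

open Real Filter

noncomputable def pd1 (f : ℝ × ℝ → ℝ) (p : ℝ × ℝ) : ℝ := fderiv ℝ f p (1, 0)

noncomputable def pd2 (f : ℝ × ℝ → ℝ) (p : ℝ × ℝ) : ℝ := fderiv ℝ f p (0, 1)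

/-- The translating soliton equation in nondivergence form. -/
def IsSolitonAt (u : ℝ × ℝ → ℝ) (p : ℝ × ℝ) : Prop :=
  (1 + (pd2 u p) ^ 2) * pd1 (pd1 u) p
    - 2 * pd1 u p * pd2 u p * pd2 (pd1 u) p
    + (1 + (pd1 u p) ^ 2) * pd2 (pd2 u) p
  = 1 + (pd1 u p) ^ 2 + (pd2 u p) ^ 2

/-- The mean curvature `H = 1/√(1+|∇u|²)` of the graph of `u`. -/
noncomputable def meanCurv (u : ℝ × ℝ → ℝ) (p : ℝ × ℝ) : ℝ :=
  1 / Real.sqrt (1 + (pd1 u p) ^ 2 + (pd2 u p) ^ 2)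

open Topology

lemma soliton_alg {a b A11 A12 A22 : ℝ}
    (hq : ∀ v₁ v₂ : ℝ, 0 ≤ A11*v₁^2 + 2*A12*(v₁*v₂) + A22*v₂^2)
    (heq : (1+b^2)*A11 - 2*a*b*A12 + (1+a^2)*A22 = 1+a^2+b^2) :
    (a*A11 + b*A12)^2 + (a*A12 + b*A22)^2 ≤ (1+a^2+b^2)^3 := by
  have h11 : 0 ≤ A11 := by have := hq 1 0; nlinarith
  have h22 : 0 ≤ A22 := by have := hq 0 1; nlinarith
  have hdet : A12^2 ≤ A11*A22 := by
    have h := discrim_le_zero (a := A11) (b := 2*A12) (c := A22) (fun x => by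
      have := hq x 1; nlinarith)
    rw [discrim] at h; nlinarith
  have hs : 0 ≤ A11*a^2 + 2*A12*(a*b) + A22*b^2 := hq a b
  have hqn : 0 ≤ A11*b^2 - 2*A12*(a*b) + A22*a^2 := by have := hq b (-a); nlinarith
  set W := 1+a^2+b^2 with hWdef
  have hW1 : 1 ≤ W := by nlinarith [sq_nonneg a, sq_nonneg b]
  have hTW : A11 + A22 ≤ W := by nlinarith
  have hT0 : 0 ≤ A11 + A22 := by linarith
  have hsT : A11*a^2 + 2*A12*(a*b) + A22*b^2 ≤ (A11+A22)*(a^2+b^2) := by nlinarith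
  have key : (a*A11 + b*A12)^2 + (a*A12 + b*A22)^2
      = (A11+A22)*(A11*a^2 + 2*A12*(a*b) + A22*b^2) - (A11*A22 - A12^2)*(a^2+b^2) := by ring
  have e1 : (a*A11 + b*A12)^2 + (a*A12 + b*A22)^2 ≤ (A11+A22)*(A11*a^2 + 2*A12*(a*b) + A22*b^2) := by
    have : 0 ≤ (A11*A22 - A12^2)*(a^2+b^2) :=
      mul_nonneg (by linarith) (by positivity)
    linarith [key]
  have e2 : (A11+A22)*(A11*a^2 + 2*A12*(a*b) + A22*b^2) ≤ (A11+A22)*((A11+A22)*(a^2+b^2)) :=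
    mul_le_mul_of_nonneg_left hsT hT0
  have e3 : (A11+A22)*((A11+A22)*(a^2+b^2)) ≤ W*(W*(a^2+b^2)) := by
    have h0 : 0 ≤ (W - (A11+A22))*(W + (A11+A22))*(a^2+b^2) := by
      apply mul_nonneg (mul_nonneg (by linarith) (by linarith)) (by positivity)
    nlinarith
  have e4 : W*(W*(a^2+b^2)) ≤ W^3 := by
    have hab : a^2+b^2 ≤ W := by rw [hWdef]; linarith
    nlinarith [sq_nonneg W, mul_nonneg (le_trans zero_le_one hW1) (le_trans zero_le_one hW1)]
  linarith

lemma secondDeriv_nonneg' {Ω : Set (ℝ×ℝ)} (hΩ : IsOpen Ω) 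
    {u : ℝ×ℝ → ℝ} (hu : ContDiffOn ℝ 2 u Ω) (hconv : ConvexOn ℝ Ω u) {p : ℝ×ℝ} (hp : p ∈ Ω)
    (v : ℝ×ℝ) :
    0 ≤ fderiv ℝ (fderiv ℝ u) p v v := by
  have hdiffΩ : ∀ q ∈ Ω, DifferentiableAt ℝ u q := fun q hq =>
    (hu.differentiableOn two_ne_zero).differentiableAt (hΩ.mem_nhds hq)
  have hdiff2 : DifferentiableAt ℝ (fderiv ℝ u) p :=
    (((hu.contDiffAt (hΩ.mem_nhds hp)).fderiv_right (m := 1) (by norm_num)).differentiableAt one_ne_zero)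
  set f'' := fderiv ℝ (fderiv ℝ u) p with hf''
  -- the line
  set L : ℝ → ℝ×ℝ := fun s => s • v + p with hL
  have hline : ∀ s : ℝ, HasDerivAt L v s := by
    intro s
    simpa [hL] using ((hasDerivAt_id s).smul_const v).add_const p
  set I : Set ℝ := L ⁻¹' Ω with hI
  have hIopen : IsOpen I := hΩ.preimage (by fun_prop)
  have h0I : (0:ℝ) ∈ I := by simp [hI, hL, hp]
  -- convexity of g
  set g : ℝ → ℝ := fun s => u (L s) with hg
  have hgconv : ConvexOn ℝ I g := by
    have := hconv.comp_affineMap (AffineMap.lineMap p (p + v))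
    have hLeq : ⇑(AffineMap.lineMap p (p+v) : ℝ →ᵃ[ℝ] ℝ×ℝ) = L := by
      funext s; simp [AffineMap.lineMap_apply, hL]
    rw [hLeq] at this
    exact this
  have hgd : ∀ s ∈ I, HasDerivAt g (fderiv ℝ u (L s) v) s := fun s hs =>
    ((hdiffΩ _ hs).hasFDerivAt.comp_hasDerivAt s (hline s))
  have hmono : MonotoneOn (deriv g) I :=
    hgconv.monotoneOn_deriv (fun s hs => (hgd s hs).differentiableAt)
  set h : ℝ → ℝ := fun s => fderiv ℝ u (L s) v with hh
  have heqI : ∀ s ∈ I, deriv g s = h s := fun s hs => (hgd s hs).deriv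
  have hmono' : MonotoneOn h I := fun s hs t ht hst => by
    rw [← heqI s hs, ← heqI t ht]; exact hmono hs ht hst
  -- h has derivative f'' v v at 0
  have hL0 : L 0 = p := by simp [hL]
  have hclm : HasDerivAt (fun s => fderiv ℝ u (L s)) (f'' v) 0 := by
    have hd2' : HasFDerivAt (fderiv ℝ u) f'' (L 0) := hL0 ▸ hdiff2.hasFDerivAt
    exact hd2'.comp_hasDerivAt 0 (hline 0)
  have hhd : HasDerivAt h (f'' v v) 0 := by
    have := hclm.clm_apply (hasDerivAt_const 0 v)
    simpa using this
  -- limit of nonneg difference quotients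
  have htend : Tendsto (slope h 0) (𝓝[>] (0:ℝ)) (𝓝 (f'' v v)) :=
    (hasDerivAt_iff_tendsto_slope.1 hhd).mono_left
      (nhdsWithin_mono _ (fun x hx => ne_of_gt hx))
  refine ge_of_tendsto htend ?_
  have hev : ∀ᶠ s in 𝓝[>] (0:ℝ), s ∈ I :=
    eventually_nhdsWithin_of_eventually_nhds (hIopen.eventually_mem h0I)
  filter_upwards [hev, self_mem_nhdsWithin] with s hsI hs0
  have hs0' : (0:ℝ) < s := hs0
  have : h 0 ≤ h s := hmono' h0I hsI (le_of_lt hs0')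
  rw [slope_def_field]
  have : 0 ≤ h s - h 0 := by linarith
  apply div_nonneg this (by linarith)

lemma meanCurv_hasFDerivAt {Ω : Set (ℝ×ℝ)} (hΩ : IsOpen Ω) {u : ℝ×ℝ → ℝ}
    (hu : ContDiffOn ℝ 2 u Ω) {p : ℝ×ℝ} (hp : p ∈ Ω) :
    HasFDerivAt (meanCurv u) (fderiv ℝ (meanCurv u) p) p ∧
    pd1 (meanCurv u) p = -(pd1 u p * pd1 (pd1 u) p + pd2 u p * pd1 (pd2 u) p) /
        (Real.sqrt (1 + pd1 u p^2 + pd2 u p^2))^3 ∧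
    pd2 (meanCurv u) p = -(pd1 u p * pd2 (pd1 u) p + pd2 u p * pd2 (pd2 u) p) /
        (Real.sqrt (1 + pd1 u p^2 + pd2 u p^2))^3 := by
  have hdiff2 : DifferentiableAt ℝ (fderiv ℝ u) p :=
    (((hu.contDiffAt (hΩ.mem_nhds hp)).fderiv_right (m := 1) (by norm_num)).differentiableAt one_ne_zero)
  set f'' := fderiv ℝ (fderiv ℝ u) p with hf''def
  have hpdj : ∀ w : ℝ×ℝ, HasFDerivAt (fun q => fderiv ℝ u q w)
      ((ContinuousLinearMap.apply ℝ ℝ w).comp f'') p := fun w =>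
    ((ContinuousLinearMap.apply ℝ ℝ w).hasFDerivAt).comp p hdiff2.hasFDerivAt
  have h1 : HasFDerivAt (pd1 u) ((ContinuousLinearMap.apply ℝ ℝ ((1:ℝ),(0:ℝ))).comp f'') p :=
    hpdj (1,0)
  have h2 : HasFDerivAt (pd2 u) ((ContinuousLinearMap.apply ℝ ℝ ((0:ℝ),(1:ℝ))).comp f'') p :=
    hpdj (0,1)
  set a := pd1 u p with ha
  set b := pd2 u p with hb
  set W : ℝ := 1 + a^2 + b^2 with hW
  have hWpos : 0 < W := by positivity
  set s : ℝ := Real.sqrt W with hsdef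
  have hspos : 0 < s := Real.sqrt_pos.2 hWpos
  have hs2 : s^2 = W := Real.sq_sqrt hWpos.le
  set D1 := (ContinuousLinearMap.apply ℝ ℝ ((1:ℝ),(0:ℝ))).comp f'' with hD1def
  set D2 := (ContinuousLinearMap.apply ℝ ℝ ((0:ℝ),(1:ℝ))).comp f'' with hD2def
  -- derivative of φ
  have h1sq : HasFDerivAt (fun q => pd1 u q ^ 2) ((2*a) • D1) p := by
    have := h1.mul h1
    have heq : a • D1 + a • D1 = (2*a) • D1 := by
      rw [two_mul, add_smul]
    rw [← heq]
    simpa [pow_two, Pi.mul_def] using this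
  have h2sq : HasFDerivAt (fun q => pd2 u q ^ 2) ((2*b) • D2) p := by
    have := h2.mul h2
    have heq : b • D2 + b • D2 = (2*b) • D2 := by
      rw [two_mul, add_smul]
    rw [← heq]
    simpa [pow_two, Pi.mul_def] using this
  have hφ : HasFDerivAt (fun q => 1 + pd1 u q ^ 2 + pd2 u q ^ 2)
      ((2*a) • D1 + (2*b) • D2) p := (h1sq.const_add 1).add h2sq
  -- derivative of 1/sqrt
  have hinv : HasDerivAt (fun t => (Real.sqrt t)⁻¹) (-(1 / (2 * s)) / s ^ 2) W := by
    have := (Real.hasDerivAt_sqrt hWpos.ne').inv (by rw [← hsdef]; exact hspos.ne')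
    simpa [hsdef, Pi.inv_def] using this
  have hcomp : HasFDerivAt (fun q => (Real.sqrt (1 + pd1 u q ^ 2 + pd2 u q ^ 2))⁻¹)
      ((-(1 / (2 * s)) / s ^ 2) • ((2*a) • D1 + (2*b) • D2)) p :=
    by have := hinv.comp_hasFDerivAt p hφ; exact this
  have hmc : HasFDerivAt (meanCurv u)
      ((-(1 / (2 * s)) / s ^ 2) • ((2*a) • D1 + (2*b) • D2)) p := by
    have hfun : meanCurv u = fun q => (Real.sqrt (1 + pd1 u q ^ 2 + pd2 u q ^ 2))⁻¹ := by
      funext q; simp [meanCurv, one_div]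
    rw [hfun]
    exact hcomp
  have hfd := hmc.fderiv
  refine ⟨by rw [hfd]; exact hmc, ?_, ?_⟩
  · have hA11 : pd1 (pd1 u) p = f'' (1,0) (1,0) := by
      show fderiv ℝ (pd1 u) p (1,0) = _
      rw [h1.fderiv]; rfl
    have hA21 : pd1 (pd2 u) p = f'' (1,0) (0,1) := by
      show fderiv ℝ (pd2 u) p (1,0) = _
      rw [h2.fderiv]; rfl
    show fderiv ℝ (meanCurv u) p (1,0) = _
    rw [hfd, hA11, hA21]
    have : ((-(1 / (2 * s)) / s ^ 2) • ((2*a) • D1 + (2*b) • D2)) ((1:ℝ),(0:ℝ))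
        = (-(1 / (2 * s)) / s ^ 2) * (2*a * f'' (1,0) (1,0) + 2*b * f'' (1,0) (0,1)) := by
      simp [hD1def, hD2def, ContinuousLinearMap.comp_apply]
      ring
    rw [this]
    have hs3 : s^3 = s * s^2 := by ring
    field_simp
  · have hA12 : pd2 (pd1 u) p = f'' (0,1) (1,0) := by
      show fderiv ℝ (pd1 u) p (0,1) = _
      rw [h1.fderiv]; rfl
    have hA22 : pd2 (pd2 u) p = f'' (0,1) (0,1) := by
      show fderiv ℝ (pd2 u) p (0,1) = _
      rw [h2.fderiv]; rfl
    show fderiv ℝ (meanCurv u) p (0,1) = _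
    rw [hfd, hA12, hA22]
    have : ((-(1 / (2 * s)) / s ^ 2) • ((2*a) • D1 + (2*b) • D2)) ((0:ℝ),(1:ℝ))
        = (-(1 / (2 * s)) / s ^ 2) * (2*a * f'' (0,1) (1,0) + 2*b * f'' (0,1) (0,1)) := by
      simp [hD1def, hD2def, ContinuousLinearMap.comp_apply]
      ring
    rw [this]
    field_simp

lemma hessian_facts {Ω : Set (ℝ×ℝ)} (hΩ : IsOpen Ω) {u : ℝ×ℝ → ℝ}
    (hu : ContDiffOn ℝ 2 u Ω) (hconv : ConvexOn ℝ Ω u) {p : ℝ×ℝ} (hp : p ∈ Ω) :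
    pd1 (pd2 u) p = pd2 (pd1 u) p ∧
    ∀ v₁ v₂ : ℝ, 0 ≤ pd1 (pd1 u) p * v₁^2 + 2 * pd2 (pd1 u) p * (v₁*v₂)
      + pd2 (pd2 u) p * v₂^2 := by
  have hdiffΩ : ∀ q ∈ Ω, DifferentiableAt ℝ u q := fun q hq =>
    (hu.differentiableOn two_ne_zero).differentiableAt (hΩ.mem_nhds hq)
  have hdiff2 : DifferentiableAt ℝ (fderiv ℝ u) p :=
    (((hu.contDiffAt (hΩ.mem_nhds hp)).fderiv_right (m := 1) (by norm_num)).differentiableAt one_ne_zero)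
  set f'' := fderiv ℝ (fderiv ℝ u) p with hf''def
  have hpdj : ∀ w : ℝ×ℝ, HasFDerivAt (fun q => fderiv ℝ u q w)
      ((ContinuousLinearMap.apply ℝ ℝ w).comp f'') p := fun w =>
    ((ContinuousLinearMap.apply ℝ ℝ w).hasFDerivAt).comp p hdiff2.hasFDerivAt
  have h1 : HasFDerivAt (pd1 u) ((ContinuousLinearMap.apply ℝ ℝ ((1:ℝ),(0:ℝ))).comp f'') p :=
    hpdj (1,0)
  have h2 : HasFDerivAt (pd2 u) ((ContinuousLinearMap.apply ℝ ℝ ((0:ℝ),(1:ℝ))).comp f'') p :=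
    hpdj (0,1)
  have hA11 : pd1 (pd1 u) p = f'' (1,0) (1,0) := by
    show fderiv ℝ (pd1 u) p (1,0) = _
    rw [h1.fderiv]; rfl
  have hA21 : pd1 (pd2 u) p = f'' (1,0) (0,1) := by
    show fderiv ℝ (pd2 u) p (1,0) = _
    rw [h2.fderiv]; rfl
  have hA12 : pd2 (pd1 u) p = f'' (0,1) (1,0) := by
    show fderiv ℝ (pd1 u) p (0,1) = _
    rw [h1.fderiv]; rfl
  have hA22 : pd2 (pd2 u) p = f'' (0,1) (0,1) := by
    show fderiv ℝ (pd2 u) p (0,1) = _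
    rw [h2.fderiv]; rfl
  have hev : ∀ᶠ y in 𝓝 p, HasFDerivAt u (fderiv ℝ u y) y := by
    filter_upwards [hΩ.mem_nhds hp] with y hy
    exact (hdiffΩ y hy).hasFDerivAt
  have hsymm : ∀ v w : ℝ×ℝ, f'' v w = f'' w v := fun v w =>
    second_derivative_symmetric_of_eventually hev hdiff2.hasFDerivAt v w
  constructor
  · rw [hA21, hA12]; exact hsymm _ _
  · intro v₁ v₂
    have hnn := secondDeriv_nonneg' hΩ hu hconv hp (v₁, v₂)
    have hv : ((v₁,v₂):ℝ×ℝ) = v₁ • ((1:ℝ),(0:ℝ)) + v₂ • ((0:ℝ),(1:ℝ)) := by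
      simp [Prod.ext_iff]
    rw [hv] at hnn
    simp only [map_add, map_smul, ContinuousLinearMap.add_apply,
      ContinuousLinearMap.smul_apply, smul_eq_mul, ← hf''def] at hnn
    rw [hA11, hA12, hA22]
    have hs := hsymm ((1:ℝ),(0:ℝ)) ((0:ℝ),(1:ℝ))
    rw [hs] at hnn
    have hid : f'' (1,0) (1,0) * v₁^2 + 2 * f'' (0,1) (1,0) * (v₁*v₂) + f'' (0,1) (0,1) * v₂^2
        = v₁ * (v₁ * f'' (1,0) (1,0) + v₂ * f'' (0,1) (1,0))
          + v₂ * (v₁ * f'' (0,1) (1,0) + v₂ * f'' (0,1) (0,1)) := by ring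
    rw [hid]
    exact hnn

/-- For a `C²` convex graphical translating soliton on an open convex set
`Ω ⊆ ℝ²`, the mean curvature `H = 1/√(1+|∇u|²)` satisfies `|∇H| ≤ 1` on `Ω`; consequently
`H` is `1`-Lipschitz with respect to the Euclidean distance on `Ω`. -/
theorem meanCurvature_gradient_bound (Ω : Set (ℝ × ℝ)) (hΩ : IsOpen Ω)
    (hΩconv : Convex ℝ Ω) (u : ℝ × ℝ → ℝ)
    (hu : ContDiffOn ℝ 2 u Ω)
    (hconv : ConvexOn ℝ Ω u)
    (hsol : ∀ p ∈ Ω, IsSolitonAt u p) :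
    (∀ p ∈ Ω, (pd1 (meanCurv u) p) ^ 2 + (pd2 (meanCurv u) p) ^ 2 ≤ 1) ∧
    (∀ x ∈ Ω, ∀ y ∈ Ω, |meanCurv u x - meanCurv u y| ≤
      Real.sqrt ((x.1 - y.1) ^ 2 + (x.2 - y.2) ^ 2)) := by
  have grad_bound : ∀ p ∈ Ω, HasFDerivAt (meanCurv u) (fderiv ℝ (meanCurv u) p) p ∧
      (pd1 (meanCurv u) p) ^ 2 + (pd2 (meanCurv u) p) ^ 2 ≤ 1 := by
    intro p hp
    obtain ⟨hmc, he1, he2⟩ := meanCurv_hasFDerivAt hΩ hu hp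
    obtain ⟨hsymm, hq⟩ := hessian_facts hΩ hu hconv hp
    refine ⟨hmc, ?_⟩
    set a := pd1 u p with hadef
    set b := pd2 u p with hbdef
    set A11 := pd1 (pd1 u) p with h11def
    set A12 := pd2 (pd1 u) p with h12def
    set A22 := pd2 (pd2 u) p with h22def
    set W : ℝ := 1 + a^2 + b^2 with hWdef
    have hWpos : (0:ℝ) < W := by positivity
    set s : ℝ := Real.sqrt W with hsdef
    have hspos : 0 < s := Real.sqrt_pos.2 hWpos
    have hs2 : s^2 = W := Real.sq_sqrt hWpos.le
    have heqs : (1+b^2)*A11 - 2*a*b*A12 + (1+a^2)*A22 = 1+a^2+b^2 := hsol p hp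
    have halg := soliton_alg hq heqs
    rw [he1, he2, hsymm]
    have hs6 : (s^3)^2 = W^3 := by rw [← hs2]; ring
    rw [div_pow, div_pow, hs6, ← add_div, neg_sq, neg_sq]
    exact div_le_one_of_le₀ halg (by positivity)
  refine ⟨fun p hp => (grad_bound p hp).2, ?_⟩
  intro x hx y hy
  set Δ₁ := x.1 - y.1 with hd1
  set Δ₂ := x.2 - y.2 with hd2
  set c : ℝ := Real.sqrt (Δ₁^2 + Δ₂^2) with hcdef
  have hc0 : 0 ≤ c := Real.sqrt_nonneg _
  have hc2 : c^2 = Δ₁^2 + Δ₂^2 := Real.sq_sqrt (by positivity)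
  set q : ℝ → ℝ×ℝ := fun t => y + t • (x - y) with hqdef
  have hqmem : ∀ t ∈ Set.Icc (0:ℝ) 1, q t ∈ Ω := fun t ht =>
    hΩconv.add_smul_sub_mem hy hx ht
  have hline : ∀ t : ℝ, HasDerivAt q (x - y) t := fun t => by
    simpa [hqdef] using ((hasDerivAt_id t).smul_const (x - y)).const_add y
  set g : ℝ → ℝ := fun t => meanCurv u (q t) with hgdef
  have hgd : ∀ t ∈ Set.Icc (0:ℝ) 1,
      HasDerivWithinAt g (fderiv ℝ (meanCurv u) (q t) (x - y)) (Set.Icc 0 1) t := fun t ht =>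
    (((grad_bound _ (hqmem t ht)).1.comp_hasDerivAt t (hline t))).hasDerivWithinAt
  have hxy : (x - y : ℝ×ℝ) = Δ₁ • ((1:ℝ),(0:ℝ)) + Δ₂ • ((0:ℝ),(1:ℝ)) := by
    simp [Prod.ext_iff, hd1, hd2]
  have hbound : ∀ t ∈ Set.Icc (0:ℝ) 1, ‖fderiv ℝ (meanCurv u) (q t) (x - y)‖ ≤ c := by
    intro t ht
    have hP := hqmem t ht
    have hb := (grad_bound _ hP).2
    set z := fderiv ℝ (meanCurv u) (q t) (x - y) with hzdef
    have hz : z = Δ₁ * pd1 (meanCurv u) (q t) + Δ₂ * pd2 (meanCurv u) (q t) := by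
      rw [hzdef, hxy, map_add, map_smul, map_smul]
      simp only [pd1, pd2, smul_eq_mul]
    have hz2 : z^2 ≤ c^2 := by
      rw [hz, hc2]
      set p₁ := pd1 (meanCurv u) (q t)
      set p₂ := pd2 (meanCurv u) (q t)
      have hd0 : 0 ≤ Δ₁^2 + Δ₂^2 := by positivity
      nlinarith [sq_nonneg (Δ₁ * p₂ - Δ₂ * p₁), hb, hd0]
    rw [Real.norm_eq_abs, ← Real.sqrt_sq_eq_abs]
    calc Real.sqrt (z^2) ≤ Real.sqrt (c^2) := Real.sqrt_le_sqrt hz2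
      _ = c := Real.sqrt_sq hc0
  have hmvt := Convex.norm_image_sub_le_of_norm_hasDerivWithin_le hgd hbound
    (convex_Icc 0 1) (Set.left_mem_Icc.2 zero_le_one) (Set.right_mem_Icc.2 zero_le_one)
  have hg1 : g 1 = meanCurv u x := by simp [hgdef, hqdef]
  have hg0 : g 0 = meanCurv u y := by simp [hgdef, hqdef]
  rw [hg1, hg0] at hmvt
  simpa using hmvt
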